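/- For every integer r ≥ 2, the following identity holds in ℋ: ∇(a b^{r−1}) = Σ_{w ∈ W_r} c^{±}(w) · w, where W_r is the set of words of length r and the integers c^{±}(w) are: c^{±}(a^r) = (−1)^{r+1}(r+1); c^{±}(a^{r−1}b) = (−1)^{r}(r−2); and c^{±}(w) = (−1)^{k(w)+1} j(w) for every other word w of length r, where j(w) is the number of letters a at the beginning of w and k(w) is the total number of occurrences of a in w. -/

import Mathlib

inductive Letter | a | b
deriving DecidableEq

abbrev Word := List Letter

/-- The algebra `ℋ`: formal `ℚ`-linear combinations of words. -/
abbrev H := Word →₀ ℚ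

/-- The list of shuffles of two words (with multiplicity). -/
def shuffleList : Word → Word → List Word
  | [], v => [v]
  | u, [] => [u]
  | x :: u, y :: v =>
      ((shuffleList u (y :: v)).map fun t => x :: t) ++
      ((shuffleList (x :: u) v).map fun t => y :: t)
termination_by u v => u.length + v.length
decreasing_by all_goals simp

/-- The shuffle product `u * v` of two words, as an element of `ℋ`. -/
noncomputable def shW (u v : Word) : H :=
  ((shuffleList u v).map fun t => Finsupp.single t (1 : ℚ)).sum

/-- The shuffle product of a word with an element of `ℋ`, extended linearly. -/
noncomputable def shWH (u : Word) (g : H) : H := g.sum fun v cv => cv • shW u v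

/-- Concatenation of a word with an element of `ℋ`, extended linearly. -/
noncomputable def concatWH (u : Word) (g : H) : H :=
  g.sum fun v c => Finsupp.single (u ++ v) c

/-- The list of all words of length `m`. -/
def wordsOfLength : ℕ → List Word
  | 0 => [[]]
  | n + 1 =>
      ((wordsOfLength n).map fun t => Letter.a :: t) ++
      ((wordsOfLength n).map fun t => Letter.b :: t)

/-- `(a+b)^m`, the `m`-fold concatenation power of `a+b` expanded multilinearly:
the sum of all words of length `m`. -/
noncomputable def abPow (m : ℕ) : H :=
  ((wordsOfLength m).map fun t => Finsupp.single t (1 : ℚ)).sum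

/-- `(b-a)^m`, the `m`-fold concatenation power of `b-a` expanded multilinearly:
the signed sum of all words of length `m`. -/
noncomputable def bmaPow (m : ℕ) : H :=
  ((wordsOfLength m).map fun t =>
    Finsupp.single t ((-1 : ℚ) ^ t.count Letter.a)).sum

/-- Concatenation product on `ℋ`, extended bilinearly from words. -/
noncomputable def concatH (f g : H) : H :=
  f.sum fun u cu => g.sum fun v cv => Finsupp.single (u ++ v) (cu * cv)

/-- `τ(a) = a + b`, `τ(b) = -a`, as elements of `ℋ`. -/
noncomputable def tauL : Letter → H
  | .a => Finsupp.single [Letter.a] 1 + Finsupp.single [Letter.b] 1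
  | .b => - Finsupp.single [Letter.a] 1

/-- `τ(c₁⋯c_n) = τ(c_n)⋯τ(c₁)`, expanded multilinearly with respect to concatenation. -/
noncomputable def tauH : Word → H
  | [] => Finsupp.single [] 1
  | c :: w => concatH (tauH w) (tauL c)

/-- The operator `∇` : `∇(c₁⋯c_n) = Σ_{i=0}^{n} (c₁⋯c_i) * τ(c_{i+1}⋯c_n)`. -/
noncomputable def nablaOp (w : Word) : H :=
  ∑ i ∈ Finset.range (w.length + 1), shWH (w.take i) (tauH (w.drop i))

def isA : Letter → Bool
  | .a => true
  | .b => false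

/-- `j(w)`: the number of letters `a` at the beginning of `w`. -/
def jW (w : Word) : ℕ := (w.takeWhile isA).length

/-- The coefficient `c^±(w)` for a word of length `r`; `k(w)` is the total number of
occurrences of `a` in `w`. -/
def cpmcoef (r : ℕ) (w : Word) : ℤ :=
  if w = List.replicate r Letter.a then (-1) ^ (r + 1) * ((r : ℤ) + 1)
  else if w = List.replicate (r - 1) Letter.a ++ [Letter.b] then (-1) ^ r * ((r : ℤ) - 2)
  else (-1) ^ (w.count Letter.a + 1) * jW w

section Aux
open Letter Finsupp

lemma shuffleList_nil_right (u : Word) : shuffleList u [] = [u] := by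
  cases u <;> simp [shuffleList]

lemma shuffleList_nil_left (v : Word) : shuffleList [] v = [v] := by
  cases v <;> simp [shuffleList]

lemma shW_nil_right (u : Word) : shW u [] = Finsupp.single u 1 := by
  simp [shW, shuffleList_nil_right]

lemma shW_nil_left (v : Word) : shW [] v = Finsupp.single v 1 := by
  simp [shW, shuffleList_nil_left]

lemma shWH_id (g : H) : shWH [] g = g := by
  unfold shWH
  have : ∀ v cv, cv • shW [] v = Finsupp.single v cv := by
    intro v cv; rw [shW_nil_left, Finsupp.smul_single]; simp
  simp only [this]
  exact Finsupp.sum_single g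

lemma shWH_single (u v : Word) (c : ℚ) : shWH u (Finsupp.single v c) = c • shW u v := by
  unfold shWH
  rw [Finsupp.sum_single_index]
  simp

end Aux
section Aux2
open Letter Finsupp

lemma concatH_single_single (u v : Word) (c d : ℚ) :
    concatH (Finsupp.single u c) (Finsupp.single v d) = Finsupp.single (u ++ v) (c * d) := by
  unfold concatH
  rw [Finsupp.sum_single_index, Finsupp.sum_single_index] <;> simp

lemma concatH_single_add (u : Word) (c : ℚ) (g₁ g₂ : H) :
    concatH (Finsupp.single u c) (g₁ + g₂)
      = concatH (Finsupp.single u c) g₁ + concatH (Finsupp.single u c) g₂ := by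
  unfold concatH
  rw [Finsupp.sum_single_index, Finsupp.sum_single_index, Finsupp.sum_single_index]
  · rw [Finsupp.sum_add_index'] <;> intros <;> simp [mul_add]
  all_goals simp

lemma tauH_repl_b (m : ℕ) :
    tauH (List.replicate m Letter.b) = Finsupp.single (List.replicate m Letter.a) ((-1) ^ m) := by
  induction m with
  | zero => simp [tauH]
  | succ m ih =>
      rw [List.replicate_succ, tauH, ih]
      show concatH _ (-Finsupp.single [Letter.a] 1) = _
      have : (-Finsupp.single [Letter.a] 1 : H) = Finsupp.single [Letter.a] (-1) := by simp
      rw [this, concatH_single_single, ← List.replicate_succ']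
      ring_nf

lemma tauH_a_repl_b (m : ℕ) :
    tauH (Letter.a :: List.replicate m Letter.b)
      = Finsupp.single (List.replicate (m+1) Letter.a) ((-1) ^ m)
        + Finsupp.single (List.replicate m Letter.a ++ [Letter.b]) ((-1) ^ m) := by
  rw [tauH, tauH_repl_b]
  show concatH _ (Finsupp.single [Letter.a] 1 + Finsupp.single [Letter.b] 1) = _
  rw [concatH_single_add, concatH_single_single, concatH_single_single, ← List.replicate_succ']
  ring_nf

end Aux2
section Aux3
open Letter

lemma mem_wordsOfLength {w : Word} {L : ℕ} : w ∈ wordsOfLength L ↔ w.length = L := by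
  induction L generalizing w with
  | zero => cases w <;> simp [wordsOfLength]
  | succ L ih =>
      cases w with
      | nil => simp [wordsOfLength]
      | cons c w =>
          cases c <;> simp [wordsOfLength, ih]

lemma nodup_wordsOfLength (L : ℕ) : (wordsOfLength L).Nodup := by
  induction L with
  | zero => simp [wordsOfLength]
  | succ L ih =>
      rw [wordsOfLength]
      refine List.Nodup.append ?_ ?_ ?_
      · exact ih.map (fun x y h => by injection h)
      · exact ih.map (fun x y h => by injection h)
      · intro x hx hy
        simp only [List.mem_map] at hx hy
        obtain ⟨u, _, rfl⟩ := hx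
        obtain ⟨v, _, h⟩ := hy
        simp at h

/-- weighted sum over all words of length `L`. -/
noncomputable def wsum (L : ℕ) (f : Word → ℚ) : H :=
  ((wordsOfLength L).map fun w => Finsupp.single w (f w)).sum

/-- weighted sum over all words of length `L`, prepended with `c`. -/
noncomputable def cwsum (c : Letter) (L : ℕ) (f : Word → ℚ) : H :=
  ((wordsOfLength L).map fun w => Finsupp.single (c :: w) (f w)).sum

lemma wsum_succ (L : ℕ) (f : Word → ℚ) :
    wsum (L + 1) f = cwsum Letter.a L (fun w => f (Letter.a :: w))
      + cwsum Letter.b L (fun w => f (Letter.b :: w)) := by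
  unfold wsum cwsum
  rw [wordsOfLength, List.map_append, List.sum_append, List.map_map, List.map_map]
  rfl

lemma wsum_congr {L : ℕ} {f g : Word → ℚ} (h : ∀ w ∈ wordsOfLength L, f w = g w) :
    wsum L f = wsum L g := by
  unfold wsum
  congr 1
  exact List.map_congr_left fun w hw => by rw [h w hw]

lemma list_sum_map_add {α : Type*} (l : List α) (f g : α → H) :
    (l.map fun x => f x + g x).sum = (l.map f).sum + (l.map g).sum := by
  induction l with
  | nil => simp
  | cons x l ih => simp [ih]; abel

lemma wsum_add (L : ℕ) (f g : Word → ℚ) :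
    wsum L (fun w => f w + g w) = wsum L f + wsum L g := by
  unfold wsum
  rw [← list_sum_map_add]
  congr 1
  exact List.map_congr_left fun w hw => by rw [Finsupp.single_add]

lemma cwsum_add (c : Letter) (L : ℕ) (f g : Word → ℚ) :
    cwsum c L (fun w => f w + g w) = cwsum c L f + cwsum c L g := by
  unfold cwsum
  rw [← list_sum_map_add]
  congr 1
  exact List.map_congr_left fun w hw => by rw [Finsupp.single_add]

lemma cwsum_congr {c : Letter} {L : ℕ} {f g : Word → ℚ} (h : ∀ w ∈ wordsOfLength L, f w = g w) :
    cwsum c L f = cwsum c L g := by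
  unfold cwsum
  congr 1
  exact List.map_congr_left fun w hw => by rw [h w hw]

lemma wsum_zero (L : ℕ) : wsum L (fun _ => 0) = 0 := by
  unfold wsum; simp

lemma cwsum_zero (c : Letter) (L : ℕ) : cwsum c L (fun _ => 0) = 0 := by
  unfold cwsum; simp

lemma sum_map_single_eq_single {l : List Word} (hl : l.Nodup) {w0 : Word} (hw : w0 ∈ l)
    (f : Word → ℚ) (h : ∀ w ∈ l, w ≠ w0 → f w = 0) :
    (l.map fun w => Finsupp.single w (f w)).sum = Finsupp.single w0 (f w0) := by
  induction l with
  | nil => simp at hw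
  | cons x l ih =>
      rcases List.mem_cons.mp hw with rfl | hw'
      · have : (l.map fun w => Finsupp.single w (f w)).sum = 0 := by
          have : ∀ w ∈ l, Finsupp.single w (f w) = 0 := by
            intro w hwl
            have : w ≠ w0 := fun e => (List.nodup_cons.mp hl).1 (e ▸ hwl)
            rw [h w (List.mem_cons_of_mem _ hwl) this]; simp
          rw [List.map_congr_left fun w hwl => this w hwl]
          simp
        simp [this]
      · have hx : f x = 0 := h x List.mem_cons_self
          (fun e => (List.nodup_cons.mp hl).1 (e ▸ hw'))
        rw [List.map_cons, List.sum_cons, hx]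
        simp [ih (List.nodup_cons.mp hl).2 hw' (fun w hwl hne => h w (List.mem_cons_of_mem _ hwl) hne)]

lemma wsum_eq_single {L : ℕ} {w0 : Word} (hw : w0.length = L) (f : Word → ℚ)
    (h : ∀ w, w.length = L → w ≠ w0 → f w = 0) :
    wsum L f = Finsupp.single w0 (f w0) :=
  sum_map_single_eq_single (nodup_wordsOfLength L) (mem_wordsOfLength.mpr hw) f
    (fun w hwl => h w (mem_wordsOfLength.mp hwl))

lemma wsum_finsetSum (L : ℕ) (s : Finset ℕ) (F : ℕ → Word → ℚ) :
    ∑ i ∈ s, wsum L (F i) = wsum L (fun w => ∑ i ∈ s, F i w) := by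
  classical
  induction s using Finset.induction with
  | empty => simp [wsum_zero]
  | @insert x s hx ih =>
      rw [Finset.sum_insert hx, ih]
      rw [← wsum_add]
      exact wsum_congr fun w hw => by rw [Finset.sum_insert hx]

end Aux3
section Aux4
open Letter

/-- prepend a letter to every word of an element of `ℋ` (linear in the element). -/
noncomputable def prep (c : Letter) (g : H) : H := Finsupp.mapDomain (List.cons c) g

lemma prep_listsum (c : Letter) (l : List Word) (f : Word → ℚ) :
    prep c ((l.map fun w => Finsupp.single w (f w)).sum)
      = (l.map fun w => Finsupp.single (c :: w) (f w)).sum := by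
  unfold prep
  rw [show (Finsupp.mapDomain (List.cons c) : H → H)
        = (Finsupp.mapDomain.addMonoidHom (List.cons c) : H →+ H) from rfl]
  rw [map_list_sum, List.map_map]
  congr 1
  apply List.map_congr_left
  intro w _
  simp [Finsupp.mapDomain.addMonoidHom_apply, Finsupp.mapDomain_single]

lemma prep_wsum (c : Letter) (L : ℕ) (f : Word → ℚ) :
    prep c (wsum L f) = cwsum c L f := prep_listsum c _ f

lemma shW_cons_cons (x y : Letter) (u v : Word) :
    shW (x :: u) (y :: v) = prep x (shW u (y :: v)) + prep y (shW (x :: u) v) := by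
  unfold shW
  rw [shuffleList]
  rw [List.map_append, List.sum_append, List.map_map, List.map_map]
  have h1 := prep_listsum x (shuffleList u (y :: v)) (fun _ => (1:ℚ))
  have h2 := prep_listsum y (shuffleList (x :: u) v) (fun _ => (1:ℚ))
  rw [show ((fun t => Finsupp.single t (1:ℚ)) ∘ fun t => x :: t)
        = fun w => Finsupp.single (x :: w) (1:ℚ) from rfl,
      show ((fun t => Finsupp.single t (1:ℚ)) ∘ fun t => y :: t)
        = fun w => Finsupp.single (y :: w) (1:ℚ) from rfl]
  rw [← h1, ← h2]

/-- sum of all words of length `L` with exactly `m` a's. -/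
noncomputable def SIf (L m : ℕ) : H :=
  wsum L (fun w => if w.count Letter.a = m then 1 else 0)

/-- j-weighted sum of all words of length `L` with exactly `m` a's. -/
noncomputable def SJ (L m : ℕ) : H :=
  wsum L (fun w => if w.count Letter.a = m then (jW w : ℚ) else 0)

lemma jW_cons_a (w : Word) : jW (Letter.a :: w) = jW w + 1 := by
  simp [jW, List.takeWhile_cons, isA]

lemma jW_cons_b (w : Word) : jW (Letter.b :: w) = 0 := by
  simp [jW, List.takeWhile_cons, isA]

lemma jW_repl_b (n : ℕ) : jW (List.replicate n Letter.b) = 0 := by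
  cases n with
  | zero => simp [jW]
  | succ n => rw [List.replicate_succ]; exact jW_cons_b _

lemma count_a_repl_b (n : ℕ) : (List.replicate n Letter.b).count Letter.a = 0 := by
  simp [List.count_replicate]

lemma eq_repl_b_of_count {w : Word} (h : w.count Letter.a = 0) :
    w = List.replicate w.length Letter.b := by
  apply List.eq_replicate_of_mem
  intro c hc
  cases c with
  | a => exact absurd hc (List.count_eq_zero.mp h)
  | b => rfl

lemma SIf_self (m : ℕ) : SIf m m = Finsupp.single (List.replicate m Letter.a) 1 := by
  unfold SIf
  have h : ∀ w : Word, w.length = m → w ≠ List.replicate m Letter.a →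
      (if w.count Letter.a = m then (1:ℚ) else 0) = 0 := by
    intro w hw hne
    rw [if_neg]
    intro hc
    exact hne (by
      have : ∀ c ∈ w, c = Letter.a := fun c hc' =>
        ((List.count_eq_length (l := w)).mp (by rw [hc, hw]) c hc').symm
      rw [← hw]; exact List.eq_replicate_of_mem this)
  rw [wsum_eq_single (by simp) _ h]
  simp [List.count_replicate]

lemma SIf_zero (L : ℕ) : SIf L 0 = Finsupp.single (List.replicate L Letter.b) 1 := by
  unfold SIf
  have h : ∀ w : Word, w.length = L → w ≠ List.replicate L Letter.b →
      (if w.count Letter.a = 0 then (1:ℚ) else 0) = 0 := by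
    intro w hw hne
    rw [if_neg]
    intro hc
    exact hne (hw ▸ eq_repl_b_of_count hc)
  rw [wsum_eq_single (by simp) _ h]
  simp [count_a_repl_b]

lemma shW_bb_aa : ∀ n m : ℕ,
    shW (List.replicate n Letter.b) (List.replicate m Letter.a) = SIf (n + m) m := by
  intro n
  induction n with
  | zero =>
      intro m
      simp only [List.replicate_zero, Nat.zero_add]
      rw [shW_nil_left, SIf_self]
  | succ n ihn =>
      intro m
      induction m with
      | zero =>
          simp only [List.replicate_zero, Nat.add_zero]
          rw [shW_nil_right, SIf_zero]
      | succ m ihm =>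
          have hb : List.replicate (n+1) Letter.b = Letter.b :: List.replicate n Letter.b :=
            List.replicate_succ ..
          have ha : List.replicate (m+1) Letter.a = Letter.a :: List.replicate m Letter.a :=
            List.replicate_succ ..
          rw [hb, ha, shW_cons_cons, ← ha, ← hb]
          rw [ihn (m+1), ihm]
          have e1 : n + 1 + m = n + m + 1 := by omega
          have e2 : n + (m + 1) = n + m + 1 := by omega
          have e3 : n + 1 + (m + 1) = (n + m + 1) + 1 := by omega
          rw [e1, e2, e3]
          unfold SIf
          rw [prep_wsum, prep_wsum, wsum_succ, add_comm]
          congr 1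
          all_goals exact cwsum_congr fun w hw => by simp [List.count_cons]

end Aux4
section Aux5
open Letter

lemma SJ_base (n : ℕ) : SJ (n + 1) 1 = Finsupp.single (Letter.a :: List.replicate n Letter.b) 1 := by
  unfold SJ
  have h : ∀ w : Word, w.length = n + 1 → w ≠ Letter.a :: List.replicate n Letter.b →
      (if w.count Letter.a = 1 then (jW w : ℚ) else 0) = 0 := by
    intro w hw hne
    by_cases hc : w.count Letter.a = 1
    · rw [if_pos hc]
      cases w with
      | nil => simp at hw
      | cons c w' =>
          cases c with
          | a =>
              exfalso
              apply hne
              have hcount : w'.count Letter.a = 0 := by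
                have := (List.count_cons_self : (Letter.a :: w').count Letter.a = w'.count Letter.a + 1) ▸ hc
                omega
              have : w' = List.replicate n Letter.b := by
                have hlen : w'.length = n := by simpa using hw
                rw [← hlen]; exact eq_repl_b_of_count hcount
              rw [this]
          | b => simp [jW_cons_b]
    · rw [if_neg hc]
  rw [wsum_eq_single (by simp) _ h]
  have h1 : (Letter.a :: List.replicate n Letter.b).count Letter.a = 1 := by
    simp [List.count_cons, count_a_repl_b]
  rw [if_pos h1, jW_cons_a, jW_repl_b]
  norm_num

lemma shW_abn_am (n : ℕ) : ∀ m : ℕ,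
    shW (Letter.a :: List.replicate n Letter.b) (List.replicate m Letter.a)
      = SJ (n + m + 1) (m + 1) := by
  intro m
  induction m with
  | zero =>
      simp only [List.replicate_zero, Nat.add_zero]
      rw [shW_nil_right, SJ_base]
  | succ m ihm =>
      have ha : List.replicate (m+1) Letter.a = Letter.a :: List.replicate m Letter.a :=
        List.replicate_succ ..
      rw [ha, shW_cons_cons, ← ha]
      rw [ihm, shW_bb_aa n (m+1)]
      have e3 : n + (m + 1) + 1 = (n + m + 1) + 1 := by omega
      have e2 : n + (m + 1) = n + m + 1 := by omega
      rw [e3, e2]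
      unfold SIf SJ
      rw [prep_wsum, prep_wsum, wsum_succ]
      have hb0 : cwsum Letter.b (n + m + 1)
          (fun w => if (Letter.b :: w).count Letter.a = m + 1 + 1 then (jW (Letter.b :: w) : ℚ) else 0) = 0 := by
        rw [← cwsum_zero Letter.b (n + m + 1)]
        exact cwsum_congr fun w hw => by simp [jW_cons_b]
      rw [hb0, add_zero]
      rw [← cwsum_add]
      exact cwsum_congr fun w hw => by
        by_cases hc : w.count Letter.a = m + 1
        · rw [if_pos hc, if_pos hc, if_pos (by simp [List.count_cons, hc]), jW_cons_a]
          push_cast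
          ring
        · rw [if_neg hc, if_neg hc, if_neg (by simp [List.count_cons, hc]), add_zero]

end Aux5
section Aux6
open Letter

lemma wsum_smul (L : ℕ) (c : ℚ) (f : Word → ℚ) :
    c • wsum L f = wsum L (fun w => c * f w) := by
  unfold wsum
  induction wordsOfLength L with
  | nil => simp
  | cons x l ih => simp [smul_add, ih]

lemma jW_repl_a (n : ℕ) : jW (List.replicate n Letter.a) = n := by
  induction n with
  | zero => simp [jW]
  | succ n ih => rw [List.replicate_succ, jW_cons_a, ih]

lemma jW_repl_a_append (n : ℕ) (w : Word) :
    jW (List.replicate n Letter.a ++ w) = n + jW w := by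
  induction n with
  | zero => simp
  | succ n ih => rw [List.replicate_succ, List.cons_append, jW_cons_a, ih]; omega

lemma sum_coeff (r k : ℕ) (J : ℚ) (hk : k ≤ r) (hr : 1 ≤ r) (hJ0 : k = 0 → J = 0) :
    ∑ j ∈ Finset.range r, (-1:ℚ)^(r-1-j) * (if k = r - j then J else 0)
      = (-1:ℚ)^(k+1) * J := by
  rcases Nat.eq_zero_or_pos k with hk0 | hk1
  · rw [hJ0 hk0]
    simp
  · rw [Finset.sum_eq_single_of_mem (r - k) (Finset.mem_range.mpr (by omega))]
    · rw [if_pos (by omega)]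
      have e1 : r - 1 - (r - k) = k - 1 := by omega
      rw [e1]
      have e2 : k + 1 = (k - 1) + 2 := by omega
      rw [e2, pow_add]
      norm_num
    · intro j hj hne
      have hj' : j < r := Finset.mem_range.mp hj
      rw [if_neg (by omega), mul_zero]

lemma repl_a_ne (r : ℕ) (hr : 1 ≤ r) :
    List.replicate r Letter.a ≠ List.replicate (r-1) Letter.a ++ [Letter.b] := by
  intro h
  have h1 : (List.replicate r Letter.a).count Letter.a = r := List.count_replicate_self ..
  have h2 : (List.replicate (r-1) Letter.a ++ [Letter.b]).count Letter.a = r - 1 := by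
    rw [List.count_append, List.count_replicate_self]
    simp
  rw [h, h2] at h1
  omega

end Aux6

/-- For `r ≥ 2`: `∇(a b^{r-1}) = Σ_{w ∈ W_r} c^±(w) · w`, the sum being over all
words of length `r`. -/
theorem statement9 (r : ℕ) (hr : 2 ≤ r) :
    nablaOp (Letter.a :: List.replicate (r - 1) Letter.b) =
      ((wordsOfLength r).map fun w => Finsupp.single w ((cpmcoef r w : ℚ))).sum := by
  have hr1 : 1 ≤ r := by omega
  set W : Word := Letter.a :: List.replicate (r - 1) Letter.b with hW
  have hlen : W.length = r := by simp [hW]; omega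
  unfold nablaOp
  rw [hlen, Finset.sum_range_succ']
  -- the i = 0 term
  have h0 : shWH (W.take 0) (tauH (W.drop 0))
      = wsum r (fun w => (if w = List.replicate r Letter.a then (-1:ℚ)^(r-1) else 0)
          + (if w = List.replicate (r-1) Letter.a ++ [Letter.b] then (-1:ℚ)^(r-1) else 0)) := by
    rw [List.take_zero, List.drop_zero, shWH_id, hW, tauH_a_repl_b]
    have e : r - 1 + 1 = r := by omega
    rw [e, wsum_add]
    congr 1
    · rw [wsum_eq_single (by simp) _ (fun w hw hne => if_neg hne), if_pos rfl]
    · rw [wsum_eq_single (by simp; omega) _ (fun w hw hne => if_neg hne), if_pos rfl]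
  -- the i = j+1 terms
  have hterm : ∀ j ∈ Finset.range r, shWH (W.take (j+1)) (tauH (W.drop (j+1)))
      = wsum r (fun w => (-1:ℚ)^(r-1-j)
          * (if w.count Letter.a = r - j then (jW w : ℚ) else 0)) := by
    intro j hj
    have hj' : j < r := Finset.mem_range.mp hj
    have htake : W.take (j+1) = Letter.a :: List.replicate j Letter.b := by
      rw [hW, List.take_succ_cons, List.take_replicate, min_eq_left (by omega)]
    have hdrop : W.drop (j+1) = List.replicate (r-1-j) Letter.b := by
      rw [hW, List.drop_succ_cons, List.drop_replicate]
    rw [htake, hdrop, tauH_repl_b, shWH_single, shW_abn_am]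
    have e1 : j + (r-1-j) + 1 = r := by omega
    have e2 : (r-1-j) + 1 = r - j := by omega
    rw [e1, e2]
    unfold SJ
    rw [wsum_smul]
  rw [Finset.sum_congr rfl hterm, wsum_finsetSum, h0, ← wsum_add]
  show wsum r _ = wsum r (fun w => (cpmcoef r w : ℚ))
  apply wsum_congr
  intro w hw
  have hwl : w.length = r := mem_wordsOfLength.mp hw
  have hkr : w.count Letter.a ≤ r := hwl ▸ (List.count_le_length : w.count Letter.a ≤ w.length)
  have hsum : ∑ j ∈ Finset.range r,
      (-1:ℚ)^(r-1-j) * (if w.count Letter.a = r - j then (jW w : ℚ) else 0)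
      = (-1:ℚ)^(w.count Letter.a + 1) * (jW w : ℚ) := by
    apply sum_coeff _ _ _ hkr hr1
    intro hk0
    have : w = List.replicate w.length Letter.b := eq_repl_b_of_count hk0
    rw [this, jW_repl_b]
    norm_num
  rw [hsum]
  unfold cpmcoef
  by_cases h1 : w = List.replicate r Letter.a
  · rw [if_pos h1, if_pos h1]
    rw [h1, List.count_replicate_self, jW_repl_a, if_neg (repl_a_ne r hr1)]
    have hp : (-1:ℚ)^(r+1) = (-1:ℚ)^(r-1) := by
      have h := pow_add (-1:ℚ) (r-1) 2
      rw [show r-1+2 = r+1 by omega] at h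
      rw [h]; norm_num
    push_cast
    rw [hp]
    ring
  · rw [if_neg h1, if_neg h1]
    by_cases h2 : w = List.replicate (r-1) Letter.a ++ [Letter.b]
    · rw [if_pos h2, if_pos h2]
      have ec : w.count Letter.a = r - 1 := by
        rw [h2, List.count_append, List.count_replicate_self]; simp
      have ej : jW w = r - 1 := by
        rw [h2, jW_repl_a_append]; simp [jW, isA]
      rw [ec, ej, show r - 1 + 1 = r by omega]
      have hp : (-1:ℚ)^r = (-1:ℚ)^(r-1) * (-1) := by
        have h := pow_succ (-1:ℚ) (r-1)
        rw [show r-1+1 = r by omega] at h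
        exact h
      push_cast [Nat.cast_sub hr1]
      rw [hp]
      ring
    · rw [if_neg h2, if_neg h2]
      push_cast
      ring
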